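/- Let f ≥ 0 and let λ be a partition. There exists a permutation lattice of order f with diagram λ if and only if |λ| ≤ f and f − |λ| is even. -/

import Mathlib

/-- `θ(k) = 1` if `k > 0` and `0` if `k < 0` (we also set it to `0` at `k = 0`,
a value never used since words have nonzero entries). -/
def theta (k : ℤ) : ℤ := if 0 < k then 1 else 0

/-- `hatCount w i k = #̂_{w^{(i)}}(k)`: the number of indices `1 ≤ j ≤ i` with `w j = k`
minus the number of indices `1 ≤ j ≤ i` with `w j = -k`.  A word of order `f` is
represented by a function `w : ℕ → ℤ`, its entries being `w 1, …, w f` (1-based). -/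
def hatCount (w : ℕ → ℤ) (i : ℕ) (k : ℤ) : ℤ :=
  (((Finset.Icc 1 i).filter fun j => w j = k).card : ℤ) -
    (((Finset.Icc 1 i).filter fun j => w j = -k).card : ℤ)

/-- `w : ℕ → ℤ` is a permutation lattice of order `f`: all entries `w 1, …, w f` are
nonzero, and for every prefix `w^{(i)}` (`1 ≤ i ≤ f`) the sequence
`k ↦ #̂_{w^{(i)}}(k)` (`k ≥ 1`) is weakly decreasing with nonnegative terms. -/
def IsPermLattice (f : ℕ) (w : ℕ → ℤ) : Prop :=
  (∀ i, 1 ≤ i → i ≤ f → w i ≠ 0) ∧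
  ∀ i, 1 ≤ i → i ≤ f → ∀ k : ℤ, 1 ≤ k →
    hatCount w i (k + 1) ≤ hatCount w i k ∧ 0 ≤ hatCount w i k

/-- The transpose word: `(w^t)_i = #̂_{w^{(i-1)}}(w_i) + θ(w_i)`. -/
def transposePL (w : ℕ → ℤ) : ℕ → ℤ := fun i => hatCount w (i - 1) (w i) + theta (w i)

/-! ### Auxiliary definitions -/

/-- Partial sums of the partition: `psum lam k = lam 1 + ⋯ + lam k`. -/
def psum (lam : ℕ →₀ ℕ) (k : ℕ) : ℕ := ∑ t ∈ Finset.Icc 1 k, lam t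

/-- The witnessing word: first `m` entries spell out the partition
(`lam 1` copies of `1`, then `lam 2` copies of `2`, …), then alternating `1, -1`. -/
def theWord (lam : ℕ →₀ ℕ) (m : ℕ) : ℕ → ℤ := fun i =>
  if i ≤ m then (((Finset.range i).filter fun t => psum lam t < i).card : ℤ)
  else if (i - m) % 2 = 1 then 1 else -1

namespace PermLatticeAux

variable {lam : ℕ →₀ ℕ}

lemma psum_mono {a b : ℕ} (h : a ≤ b) : psum lam a ≤ psum lam b :=
  Finset.sum_le_sum_of_subset (Finset.Icc_subset_Icc_right h)

lemma psum_zero : psum lam 0 = 0 := by simp [psum]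

lemma psum_succ (lam : ℕ →₀ ℕ) (r : ℕ) : psum lam (r+1) = psum lam r + lam (r+1) := by
  have := Finset.sum_Icc_succ_top (a := 1) (b := r) (by omega) (fun t => lam t)
  simpa [psum] using this

lemma psum_le_sum (lam : ℕ →₀ ℕ) (k : ℕ) : psum lam k ≤ lam.sum fun _ n => n := by
  classical
  have h1 : psum lam k = ∑ t ∈ (Finset.Icc 1 k) ∩ lam.support, lam t := by
    refine (Finset.sum_subset (Finset.inter_subset_left) ?_).symm
    intro x hx hx'
    simp only [Finset.mem_inter, Finsupp.mem_support_iff] at hx'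
    by_contra h
    exact hx' ⟨hx, h⟩
  rw [h1, Finsupp.sum]
  exact Finset.sum_le_sum_of_subset Finset.inter_subset_right

lemma psum_eq_sum (lam : ℕ →₀ ℕ) (hlam0 : lam 0 = 0) {K : ℕ}
    (hK : ∀ x ∈ lam.support, x ≤ K) : psum lam K = lam.sum fun _ n => n := by
  classical
  rw [Finsupp.sum, psum]
  refine (Finset.sum_subset ?_ ?_).symm
  · intro x hx
    have hx0 : x ≠ 0 := by rintro rfl; simp [Finsupp.mem_support_iff, hlam0] at hx
    exact Finset.mem_Icc.2 ⟨by omega, hK x hx⟩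
  · intro x _ hx
    by_contra h
    exact hx (Finsupp.mem_support_iff.2 h)

lemma lam_anti (hlam : ∀ r : ℕ, 1 ≤ r → lam (r + 1) ≤ lam r)
    {a b : ℕ} (ha : 1 ≤ a) (h : a ≤ b) : lam b ≤ lam a := by
  induction b with
  | zero => omega
  | succ n ih =>
    rcases Nat.lt_or_ge a (n+1) with h' | h'
    · exact le_trans (hlam n (by omega)) (ih (by omega))
    · have : a = n + 1 := by omega
      subst this; exact le_rfl

/-- if some box lies beyond `psum t`, then `lam (t+1) ≥ 1`, hence `t ≤ psum t`. -/
lemma self_le_psum (hlam0 : lam 0 = 0) (hlam : ∀ r : ℕ, 1 ≤ r → lam (r + 1) ≤ lam r)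
    {t i : ℕ} (h : psum lam t < i) (hi : i ≤ lam.sum fun _ n => n) :
    t ≤ psum lam t := by
  classical
  have h1 : 1 ≤ lam (t+1) := by
    by_contra h0
    have hz : lam (t+1) = 0 := by omega
    have hK : ∀ x ∈ lam.support, x ≤ t := by
      intro x hx
      by_contra hx'
      have hxt : t + 1 ≤ x := by omega
      have h2 : lam x ≤ lam (t+1) := lam_anti hlam (by omega) hxt
      have h3 : lam x = 0 := by omega
      exact (Finsupp.mem_support_iff.1 hx) h3
    have := psum_eq_sum lam hlam0 hK
    omega
  have h2 : ∀ j ∈ Finset.Icc 1 t, 1 ≤ lam j := by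
    intro j hj
    rw [Finset.mem_Icc] at hj
    exact le_trans h1 (lam_anti hlam hj.1 (by omega))
  calc t = (Finset.Icc 1 t).card • 1 := by simp [Nat.card_Icc]
  _ ≤ ∑ j ∈ Finset.Icc 1 t, lam j := Finset.card_nsmul_le_sum _ _ _ h2
  _ = psum lam t := rfl

/-- there exists `t` with `i ≤ psum t` (when `i ≤ m`). -/
lemma exists_psum_ge (hlam0 : lam 0 = 0) {i : ℕ} (hi : i ≤ lam.sum fun _ n => n) :
    ∃ t, i ≤ psum lam t := by
  classical
  refine ⟨lam.support.sup id, ?_⟩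
  rw [psum_eq_sum lam hlam0 (fun x hx => Finset.le_sup (f := id) hx)]
  exact hi

/-- the defining property of the positive part of the word. -/
lemma theWord_eq_iff (hlam0 : lam 0 = 0) (hlam : ∀ r : ℕ, 1 ≤ r → lam (r + 1) ≤ lam r)
    {i : ℕ} (hi1 : 1 ≤ i) (hi : i ≤ lam.sum fun _ n => n) (r : ℕ) (hr : 1 ≤ r) :
    theWord lam (lam.sum fun _ n => n) i = (r : ℤ) ↔
      psum lam (r-1) < i ∧ i ≤ psum lam r := by
  classical
  have hex : ∃ t, i ≤ psum lam t := exists_psum_ge hlam0 hi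
  set c := Nat.find hex with hc
  have hcs : i ≤ psum lam c := Nat.find_spec hex
  have hcm : ∀ t, t < c → psum lam t < i := fun t ht => by
    have := Nat.find_min hex ht; omega
  have hc1 : 1 ≤ c := by
    rcases Nat.eq_zero_or_pos c with h | h
    · exfalso; rw [h, psum_zero] at hcs; omega
    · exact h
  have hfe : ((Finset.range i).filter fun t => psum lam t < i) = Finset.range c := by
    ext t
    simp only [Finset.mem_filter, Finset.mem_range]
    constructor
    · rintro ⟨-, ht⟩
      by_contra h
      have : psum lam c ≤ psum lam t := psum_mono (by omega)
      omega
    · intro ht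
      have h1 : psum lam t < i := hcm t ht
      exact ⟨by have := self_le_psum hlam0 hlam h1 hi; omega, h1⟩
  have hw : theWord lam (lam.sum fun _ n => n) i = (c : ℤ) := by
    rw [theWord, if_pos hi, hfe, Finset.card_range]
  rw [hw]
  constructor
  · intro h
    have : c = r := by exact_mod_cast h
    subst this
    exact ⟨hcm _ (by omega), hcs⟩
  · rintro ⟨h1, h2⟩
    have : c = r := by
      by_contra h
      rcases Nat.lt_or_ge c r with h' | h'
      · have : psum lam c ≤ psum lam (r-1) := psum_mono (by omega)
        omega
      · have hr' : r < c := by omega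
        have := hcm r hr'
        omega
    rw [this]

lemma theWord_pos {i : ℕ} (hi : i ≤ lam.sum fun _ n => n) :
    0 ≤ theWord lam (lam.sum fun _ n => n) i := by
  rw [theWord, if_pos hi]; positivity

lemma theWord_one_le {i : ℕ} (hi1 : 1 ≤ i) (hi : i ≤ lam.sum fun _ n => n) :
    1 ≤ theWord lam (lam.sum fun _ n => n) i := by
  rw [theWord, if_pos hi]
  have h0 : (0 : ℕ) ∈ (Finset.range i).filter fun t => psum lam t < i := by
    refine Finset.mem_filter.2 ⟨Finset.mem_range.2 (by omega), ?_⟩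
    rw [psum_zero]; omega
  have := Finset.card_pos.2 ⟨0, h0⟩
  exact_mod_cast this

/-- the prefix-count formula inside the partition part. -/
lemma hatCount_of_le (hlam0 : lam 0 = 0) (hlam : ∀ r : ℕ, 1 ≤ r → lam (r + 1) ≤ lam r)
    {i : ℕ} (hi : i ≤ lam.sum fun _ n => n) (r : ℕ) (hr : 1 ≤ r) :
    hatCount (theWord lam (lam.sum fun _ n => n)) i (r : ℤ) =
      (min i (psum lam r) : ℤ) - (min i (psum lam (r-1)) : ℤ) := by
  classical
  set m := lam.sum fun _ n => n with hm
  set w := theWord lam m with hwdef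
  have hneg : ((Finset.Icc 1 i).filter fun j => w j = -(r:ℤ)) = ∅ := by
    refine Finset.filter_false_of_mem ?_
    intro j hj
    rw [Finset.mem_Icc] at hj
    have h0 : 0 ≤ w j := theWord_pos (by omega)
    intro h
    rw [h] at h0
    omega
  have hpos : ((Finset.Icc 1 i).filter fun j => w j = (r:ℤ)) =
      Finset.Icc (psum lam (r-1) + 1) (min i (psum lam r)) := by
    ext j
    simp only [Finset.mem_filter, Finset.mem_Icc]
    constructor
    · rintro ⟨⟨hj1, hj2⟩, hj3⟩
      have := (theWord_eq_iff hlam0 hlam hj1 (by omega) r hr).1 hj3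
      omega
    · rintro ⟨hj1, hj2⟩
      have hj0 : 1 ≤ j := by have := (psum lam (r-1)).zero_le; omega
      refine ⟨⟨hj0, by omega⟩, ?_⟩
      exact (theWord_eq_iff hlam0 hlam hj0 (by omega) r hr).2 ⟨by omega, by omega⟩
  rw [hatCount, hneg, hpos, Nat.card_Icc]
  have h1 : psum lam (r-1) ≤ psum lam r := psum_mono (by omega)
  simp only [Finset.card_empty]
  push_cast
  omega

/-- generic split of `hatCount` at position `m`. -/
lemma hatCount_split (w : ℕ → ℤ) {m i : ℕ} (h : m ≤ i) (k : ℤ) :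
    hatCount w i k = hatCount w m k +
      ((((Finset.Icc (m+1) i).filter fun j => w j = k).card : ℤ) -
       (((Finset.Icc (m+1) i).filter fun j => w j = -k).card : ℤ)) := by
  classical
  have hsplit : Finset.Icc 1 i = Finset.Icc 1 m ∪ Finset.Icc (m+1) i := by
    ext j; simp only [Finset.mem_Icc, Finset.mem_union]; omega
  have hdisj : Disjoint (Finset.Icc 1 m) (Finset.Icc (m+1) i) := by
    rw [Finset.disjoint_left]
    intro a ha hb
    rw [Finset.mem_Icc] at ha hb
    omega
  rw [hatCount, hatCount, hsplit, Finset.filter_union, Finset.filter_union,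
    Finset.card_union_of_disjoint
      (hdisj.mono (Finset.filter_subset _ _) (Finset.filter_subset _ _)),
    Finset.card_union_of_disjoint
      (hdisj.mono (Finset.filter_subset _ _) (Finset.filter_subset _ _))]
  push_cast
  ring

lemma theWord_tail {m j : ℕ} (h : m < j) :
    theWord lam m j = if (j - m) % 2 = 1 then 1 else -1 := by
  rw [theWord, if_neg (by omega)]

/-- tail difference for `k = 1`. -/
lemma tail_diff_one {m i : ℕ} (h : m ≤ i) :
    (((Finset.Icc (m+1) i).filter fun j => theWord lam m j = (1:ℤ)).card : ℤ) -
      (((Finset.Icc (m+1) i).filter fun j => theWord lam m j = -(1:ℤ)).card : ℤ)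
      = (((i - m) % 2 : ℕ) : ℤ) := by
  classical
  induction i, h using Nat.le_induction with
  | base => simp
  | succ i hi ih =>
    have hins : Finset.Icc (m+1) (i+1) = insert (i+1) (Finset.Icc (m+1) i) := by
      ext j; simp only [Finset.mem_Icc, Finset.mem_insert]; omega
    have hnotmem1 : (i+1) ∉ (Finset.Icc (m+1) i).filter
        fun j => theWord lam m j = (1:ℤ) := by simp
    have hnotmem2 : (i+1) ∉ (Finset.Icc (m+1) i).filter
        fun j => theWord lam m j = -(1:ℤ) := by simp
    rcases Nat.eq_zero_or_pos ((i+1-m) % 2) with hp | hp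
    · have hw' : theWord lam m (i+1) = -1 := by
        rw [theWord_tail (by omega), if_neg (by omega)]
      rw [hins, Finset.filter_insert, Finset.filter_insert, hw',
        if_neg (by norm_num), if_pos rfl, Finset.card_insert_of_notMem hnotmem2]
      push_cast
      omega
    · have hw' : theWord lam m (i+1) = 1 := by
        rw [theWord_tail (by omega), if_pos (by omega)]
      rw [hins, Finset.filter_insert, Finset.filter_insert, hw',
        if_pos rfl, if_neg (by norm_num), Finset.card_insert_of_notMem hnotmem1]
      push_cast
      omega

/-- tail filters are empty for `k ≥ 2`. -/
lemma tail_empty {m i : ℕ} (r : ℕ) (hr : 2 ≤ r) :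
    (((Finset.Icc (m+1) i).filter fun j => theWord lam m j = (r:ℤ)) = ∅) ∧
    (((Finset.Icc (m+1) i).filter fun j => theWord lam m j = -(r:ℤ)) = ∅) := by
  constructor <;>
  · refine Finset.filter_false_of_mem ?_
    intro j hj
    rw [Finset.mem_Icc] at hj
    rw [theWord_tail (by omega)]
    split <;> intro h <;> omega

/-- the value at position `m` itself: the full diagram. -/
lemma hatCount_at_m (hlam0 : lam 0 = 0) (hlam : ∀ r : ℕ, 1 ≤ r → lam (r + 1) ≤ lam r)
    (r : ℕ) (hr : 1 ≤ r) :
    hatCount (theWord lam (lam.sum fun _ n => n)) (lam.sum fun _ n => n) (r : ℤ)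
      = (lam r : ℤ) := by
  rw [hatCount_of_le hlam0 hlam le_rfl r hr]
  have h1 : psum lam r ≤ lam.sum fun _ n => n := psum_le_sum lam r
  have h2 : psum lam (r-1) ≤ psum lam r := psum_mono (by omega)
  have h3 : psum lam (r-1) + lam r = psum lam r := by
    obtain ⟨t, rfl⟩ : ∃ t, r = t + 1 := ⟨r - 1, by omega⟩
    simpa using (psum_succ lam t).symm
  omega

/-- the prefix-count formula in the alternating part. -/
lemma hatCount_of_ge (hlam0 : lam 0 = 0) (hlam : ∀ r : ℕ, 1 ≤ r → lam (r + 1) ≤ lam r)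
    {i : ℕ} (hi : (lam.sum fun _ n => n) ≤ i) (r : ℕ) (hr : 1 ≤ r) :
    hatCount (theWord lam (lam.sum fun _ n => n)) i (r : ℤ) =
      (lam r : ℤ) +
        (if r = 1 then (((i - (lam.sum fun _ n => n)) % 2 : ℕ) : ℤ) else 0) := by
  classical
  rcases eq_or_ne r 1 with hr1 | hr1
  · subst hr1
    rw [hatCount_split (theWord lam (lam.sum fun _ n => n)) hi ((1:ℕ):ℤ),
      hatCount_at_m hlam0 hlam 1 le_rfl, if_pos rfl]
    have := tail_diff_one (lam := lam) hi
    push_cast at this ⊢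
    omega
  · rw [hatCount_split (theWord lam (lam.sum fun _ n => n)) hi ((r:ℕ):ℤ),
      hatCount_at_m hlam0 hlam r hr,
      (tail_empty r (by omega)).1, (tail_empty r (by omega)).2, if_neg hr1]
    simp

/-- Backward direction: construction of the permutation lattice. -/
lemma backward_dir (f : ℕ) (hlam0 : lam 0 = 0)
    (hlam : ∀ r : ℕ, 1 ≤ r → lam (r + 1) ≤ lam r)
    (hle : (lam.sum fun _ n => n) ≤ f) (heven : Even (f - lam.sum fun _ n => n)) :
    ∃ w : ℕ → ℤ, IsPermLattice f w ∧
      ∀ r : ℕ, 1 ≤ r → hatCount w f (r : ℤ) = (lam r : ℤ) := by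
  classical
  refine ⟨theWord lam (lam.sum fun _ n => n), ⟨?_, ?_⟩, ?_⟩
  · -- nonzero entries
    intro i hi1 hif
    by_cases him : i ≤ lam.sum fun _ n => n
    · have := theWord_one_le (lam := lam) hi1 him
      omega
    · rw [theWord_tail (by omega)]
      split <;> omega
  · -- lattice condition
    intro i hi1 hif k hk
    obtain ⟨r, hr, hkr⟩ : ∃ r : ℕ, 1 ≤ r ∧ (r : ℤ) = k := ⟨k.toNat, by omega, by omega⟩
    have hkr1 : ((r + 1 : ℕ) : ℤ) = k + 1 := by push_cast; omega
    rw [← hkr1, ← hkr]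
    by_cases him : i ≤ lam.sum fun _ n => n
    · rw [hatCount_of_le hlam0 hlam him (r+1) (by omega),
        hatCount_of_le hlam0 hlam him r hr]
      have e1 : r + 1 - 1 = r := by omega
      rw [e1]
      have h1 : psum lam (r-1) ≤ psum lam r := psum_mono (by omega)
      have h2 : psum lam r + lam (r+1) = psum lam (r+1) := (psum_succ lam r).symm
      have h3 : psum lam (r-1) + lam r = psum lam r := by
        obtain ⟨t, rfl⟩ : ∃ t, r = t + 1 := ⟨r - 1, by omega⟩
        simpa using (psum_succ lam t).symm
      have h4 : lam (r+1) ≤ lam r := hlam r hr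
      omega
    · have him' : (lam.sum fun _ n => n) ≤ i := by omega
      rw [hatCount_of_ge hlam0 hlam him' (r+1) (by omega),
        hatCount_of_ge hlam0 hlam him' r hr, if_neg (by omega)]
      rcases eq_or_ne r 1 with hr1 | hr1
      · subst hr1
        rw [if_pos rfl]
        have h4 : lam 2 ≤ lam 1 := hlam 1 le_rfl
        constructor <;> push_cast <;> omega
      · rw [if_neg hr1]
        have h4 : lam (r+1) ≤ lam r := hlam r hr
        omega
  · -- the diagram is lam
    intro r hr
    rw [hatCount_of_ge hlam0 hlam hle r hr]
    have h0 : (f - lam.sum fun _ n => n) % 2 = 0 := Nat.even_iff.1 heven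
    rw [h0]
    split <;> simp

/-- Forward direction: counting boxes. -/
lemma forward_dir (f : ℕ) (hlam0 : lam 0 = 0) (w : ℕ → ℤ)
    (hw : IsPermLattice f w)
    (hd : ∀ r : ℕ, 1 ≤ r → hatCount w f (r : ℤ) = (lam r : ℤ)) :
    (lam.sum fun _ n => n) ≤ f ∧ Even (f - lam.sum fun _ n => n) := by
  classical
  set m := lam.sum fun _ n => n with hm
  set B := (Finset.Icc 1 f).sup fun j => (w j).natAbs with hB
  have hBle : ∀ j, 1 ≤ j → j ≤ f → (w j).natAbs ≤ B := by
    intro j h1 h2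
    exact Finset.le_sup (f := fun j => (w j).natAbs) (Finset.mem_Icc.2 ⟨h1, h2⟩)
  have hlamB : ∀ x ∈ lam.support, x ≤ B := by
    intro x hx
    by_contra h
    have hx1 : 1 ≤ x := by
      rcases Nat.eq_zero_or_pos x with h0 | h0
      · exfalso; rw [h0] at hx; exact (Finsupp.mem_support_iff.1 hx) hlam0
      · exact h0
    have h0 : hatCount w f (x : ℤ) = 0 := by
      rw [hatCount]
      have e1 : ((Finset.Icc 1 f).filter fun j => w j = (x:ℤ)) = ∅ := by
        refine Finset.filter_false_of_mem ?_
        intro j hj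
        rw [Finset.mem_Icc] at hj
        have := hBle j hj.1 hj.2
        intro he; rw [he] at this; simp at this; omega
      have e2 : ((Finset.Icc 1 f).filter fun j => w j = -(x:ℤ)) = ∅ := by
        refine Finset.filter_false_of_mem ?_
        intro j hj
        rw [Finset.mem_Icc] at hj
        have := hBle j hj.1 hj.2
        intro he; rw [he] at this; simp at this; omega
      rw [e1, e2]; simp
    have := hd x hx1
    rw [h0] at this
    exact (Finsupp.mem_support_iff.1 hx) (by exact_mod_cast this.symm)
  have hpsB : psum lam B = m := psum_eq_sum lam hlam0 hlamB
  set P := (Finset.Icc 1 f).filter fun j => 0 < w j with hP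
  set N := (Finset.Icc 1 f).filter fun j => w j < 0 with hN
  have hPN : P.card + N.card = f := by
    have h1 : N = (Finset.Icc 1 f).filter fun j => ¬ 0 < w j := by
      refine Finset.filter_congr ?_
      intro j hj
      rw [Finset.mem_Icc] at hj
      have := hw.1 j hj.1 hj.2
      constructor <;> intro <;> omega
    rw [h1, hP, Finset.card_filter_add_card_filter_not, Nat.card_Icc]
    omega
  have hsumpos : P.card = ∑ r ∈ Finset.Icc 1 B,
      ((Finset.Icc 1 f).filter fun j => w j = (r:ℤ)).card := by
    rw [Finset.card_eq_sum_card_fiberwise (f := fun j => (w j).toNat)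
      (t := Finset.Icc 1 B) ?_]
    · refine Finset.sum_congr rfl ?_
      intro r hr
      rw [Finset.mem_Icc] at hr
      congr 1
      ext j
      simp only [hP, Finset.mem_filter, Finset.mem_Icc, and_assoc]
      constructor
      · rintro ⟨h1, h2, h3, h4⟩; exact ⟨h1, h2, by omega⟩
      · rintro ⟨h1, h2, h3⟩; exact ⟨h1, h2, by omega, by omega⟩
    · intro j hj
      simp only [hP, Finset.mem_coe, Finset.mem_filter, Finset.mem_Icc] at hj
      obtain ⟨⟨hj1, hj2⟩, hj3⟩ := hj
      have h5 := hBle j hj1 hj2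
      simp only [Finset.mem_coe, Finset.mem_Icc]
      omega
  have hsumneg : N.card = ∑ r ∈ Finset.Icc 1 B,
      ((Finset.Icc 1 f).filter fun j => w j = -(r:ℤ)).card := by
    rw [Finset.card_eq_sum_card_fiberwise (f := fun j => (-w j).toNat)
      (t := Finset.Icc 1 B) ?_]
    · refine Finset.sum_congr rfl ?_
      intro r hr
      rw [Finset.mem_Icc] at hr
      congr 1
      ext j
      simp only [hN, Finset.mem_filter, Finset.mem_Icc, and_assoc]
      constructor
      · rintro ⟨h1, h2, h3, h4⟩; exact ⟨h1, h2, by omega⟩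
      · rintro ⟨h1, h2, h3⟩; exact ⟨h1, h2, by omega, by omega⟩
    · intro j hj
      simp only [hN, Finset.mem_coe, Finset.mem_filter, Finset.mem_Icc] at hj
      obtain ⟨⟨hj1, hj2⟩, hj3⟩ := hj
      have h5 := hBle j hj1 hj2
      simp only [Finset.mem_coe, Finset.mem_Icc]
      omega
  have hkey : (m : ℤ) = (P.card : ℤ) - (N.card : ℤ) := by
    have h1 : ∑ r ∈ Finset.Icc 1 B, hatCount w f (r : ℤ) = (m : ℤ) := by
      rw [← hpsB, psum]
      push_cast
      refine Finset.sum_congr rfl ?_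
      intro r hr
      rw [Finset.mem_Icc] at hr
      exact hd r hr.1
    rw [← h1]
    simp only [hatCount, Finset.sum_sub_distrib]
    rw [← Nat.cast_sum, ← Nat.cast_sum, ← hsumpos, ← hsumneg]
  constructor
  · omega
  · rw [Nat.even_iff]
    omega

end PermLatticeAux

/-- Let `f ≥ 0` and let `λ` be a partition (a finitely supported
weakly decreasing function, `1`-based, with `|λ|` its number of boxes).  There exists a
permutation lattice of order `f` with diagram `λ` if and only if `|λ| ≤ f` and
`f − |λ|` is even. -/
theorem exists_permLattice_iff (f : ℕ)
    (lam : ℕ →₀ ℕ) (hlam0 : lam 0 = 0)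
    (hlam : ∀ r : ℕ, 1 ≤ r → lam (r + 1) ≤ lam r) :
    (∃ w : ℕ → ℤ, IsPermLattice f w ∧
        ∀ r : ℕ, 1 ≤ r → hatCount w f (r : ℤ) = (lam r : ℤ)) ↔
      (lam.sum fun _ n => n) ≤ f ∧ Even (f - lam.sum fun _ n => n) := by
  constructor
  · rintro ⟨w, hw, hd⟩
    exact PermLatticeAux.forward_dir f hlam0 w hw hd
  · rintro ⟨hle, heven⟩
    exact PermLatticeAux.backward_dir f hlam0 hlam hle heven
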